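/- Conservation of mass for the deterministic integral equation: suppose A : [0,T] → ℝ is continuous and satisfies A(t) = H^A(t) + ∫_0^t λ^A(t|s) S^A(t|s) A(s) ds for all t ∈ [0,T], where S^A(t|s) = exp(-∫_s^t λ^A(r|s) dr) and H^A, H̃^A are defined as in the paper with H^A(t) = -d/dt H̃^A(t). Then the normalization M(t) := H̃^A(t) + ∫_0^t S^A(t|s) A(s) ds is constant in t; in particular if H̃^A(0) = 1 then M(t) = 1 for all t ∈ [0,T]. -/

import Mathlib

open Real MeasureTheory intervalIntegral Set


lemma triangle_swap (g : ℝ → ℝ → ℝ) (hg : Continuous fun p : ℝ × ℝ => g p.1 p.2)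
    (t : ℝ) (ht : 0 ≤ t) :
    (∫ s in (0:ℝ)..t, ∫ r in s..t, g r s) = ∫ r in (0:ℝ)..t, ∫ s in (0:ℝ)..r, g r s := by
  set I : Set ℝ := Icc 0 t with hI
  set F : ℝ × ℝ → ℝ := fun p => if p.2 ≤ p.1 then g p.1 p.2 else 0 with hF
  have hFmeas : Measurable F :=
    Measurable.ite (measurableSet_le measurable_snd measurable_fst) hg.measurable
      measurable_const
  have hFint : IntegrableOn F (I ×ˢ I) := by
    apply Integrable.mono' ((hg.norm.continuousOn).integrableOn_compact
      (isCompact_Icc.prod isCompact_Icc))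
    · exact hFmeas.aestronglyMeasurable
    · filter_upwards with p
      by_cases h : p.2 ≤ p.1 <;> simp [hF, h, abs_nonneg]
  have hFint' : Integrable F ((volume.restrict I).prod (volume.restrict I)) := by
    rw [Measure.prod_restrict]
    rw [MeasureTheory.Measure.volume_eq_prod] at hFint
    exact hFint
  have key : (∫ r in I, ∫ s in I, F (r, s)) = ∫ s in I, ∫ r in I, F (r, s) :=
    integral_integral_swap hFint'
  -- LHS of goal
  have lhs : (∫ s in (0:ℝ)..t, ∫ r in s..t, g r s) = ∫ s in I, ∫ r in I, F (r, s) := by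
    rw [integral_of_le ht, ← integral_Icc_eq_integral_Ioc]
    apply setIntegral_congr_fun measurableSet_Icc
    intro s hs
    have h1 : (∫ r in s..t, g r s) = ∫ r in Icc s t, g r s := by
      rw [integral_of_le hs.2, ← integral_Icc_eq_integral_Ioc]
    have h2 : I ∩ Ici s = Icc s t := by
      ext x; simp only [hI, mem_inter_iff, mem_Icc, mem_Ici]
      constructor
      · rintro ⟨⟨_, hxt⟩, hsx⟩; exact ⟨hsx, hxt⟩
      · rintro ⟨hsx, hxt⟩; exact ⟨⟨le_trans hs.1 hsx, hxt⟩, hsx⟩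
    have h3 : (∫ r in I, F (r, s)) = ∫ r in I ∩ Ici s, g r s := by
      rw [← setIntegral_indicator measurableSet_Ici]
      apply setIntegral_congr_fun measurableSet_Icc
      intro r _
      simp only [hF, indicator_apply, mem_Ici]
    show (∫ r in s..t, g r s) = ∫ r in I, F (r, s)
    rw [h1, h3, h2]
  -- RHS of goal
  have rhs : (∫ r in (0:ℝ)..t, ∫ s in (0:ℝ)..r, g r s) = ∫ r in I, ∫ s in I, F (r, s) := by
    rw [integral_of_le ht, ← integral_Icc_eq_integral_Ioc]
    apply setIntegral_congr_fun measurableSet_Icc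
    intro r hr
    have h1 : (∫ s in (0:ℝ)..r, g r s) = ∫ s in Icc 0 r, g r s := by
      rw [integral_of_le hr.1, ← integral_Icc_eq_integral_Ioc]
    have h2 : I ∩ Iic r = Icc 0 r := by
      ext x; simp only [hI, mem_inter_iff, mem_Icc, mem_Iic]
      constructor
      · rintro ⟨⟨hx0, _⟩, hxr⟩; exact ⟨hx0, hxr⟩
      · rintro ⟨hx0, hxr⟩; exact ⟨⟨hx0, le_trans hxr hr.2⟩, hxr⟩
    have h3 : (∫ s in I, F (r, s)) = ∫ s in I ∩ Iic r, g r s := by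
      rw [← setIntegral_indicator measurableSet_Iic]
      apply setIntegral_congr_fun measurableSet_Icc
      intro s _
      simp only [hF, indicator_apply, mem_Iic]
    show (∫ s in (0:ℝ)..r, g r s) = ∫ s in I, F (r, s)
    rw [h1, h3, h2]
  rw [lhs, rhs, key]

/-- Conservation of mass for the deterministic integral equation.
`lam t s` is the hazard rate λ^A(t|s) (continuous in both variables),
`S t s = exp(-∫_s^t lam r s dr)` the survival, `Htilde` and `H` are as in the paper
with `(Htilde)' = -H`, and `A` solves the integral equation on `[0,T]`.
Then `M t = Htilde t + ∫_0^t S t s · A s ds` is constant. -/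
theorem mass_conservation (T : ℝ) (hT : 0 ≤ T)
    (lam : ℝ → ℝ → ℝ) (hlam : Continuous fun p : ℝ × ℝ => lam p.1 p.2)
    (H Htilde A : ℝ → ℝ) (hH : Continuous H) (hA : Continuous A)
    (hderiv : ∀ t ∈ Set.Icc 0 T, HasDerivAt Htilde (-H t) t)
    (heq : ∀ t ∈ Set.Icc 0 T,
      A t = H t + ∫ s in (0:ℝ)..t,
        lam t s * Real.exp (-(∫ r in s..t, lam r s)) * A s) :
    (∀ t ∈ Set.Icc 0 T,
      (Htilde t + ∫ s in (0:ℝ)..t, Real.exp (-(∫ r in s..t, lam r s)) * A s)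
        = Htilde 0) ∧
    (Htilde 0 = 1 → ∀ t ∈ Set.Icc 0 T,
      (Htilde t + ∫ s in (0:ℝ)..t, Real.exp (-(∫ r in s..t, lam r s)) * A s) = 1) := by
  -- continuity of the parametric integral (p.1, p.2) ↦ ∫_{p.2}^{p.1} lam
  have hlam1 : ∀ c : ℝ, Continuous fun u => lam u c := fun c =>
    hlam.comp (continuous_id.prodMk continuous_const)
  have hE : Continuous fun p : ℝ × ℝ => ∫ u in p.2..p.1, lam u p.2 := by
    have h1 : Continuous fun p : ℝ × ℝ => ∫ u in (0:ℝ)..p.1, lam u p.2 := by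
      apply continuous_parametric_intervalIntegral_of_continuous
      · exact hlam.comp (continuous_snd.prodMk continuous_fst.snd)
      · exact continuous_fst
    have h2 : Continuous fun p : ℝ × ℝ => ∫ u in (0:ℝ)..p.2, lam u p.2 := by
      apply continuous_parametric_intervalIntegral_of_continuous
      · exact hlam.comp (continuous_snd.prodMk continuous_fst.snd)
      · exact continuous_snd
    have heqfun : (fun p : ℝ × ℝ => ∫ u in p.2..p.1, lam u p.2)
        = fun p : ℝ × ℝ => (∫ u in (0:ℝ)..p.1, lam u p.2) - ∫ u in (0:ℝ)..p.2, lam u p.2 := by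
      funext p
      exact (integral_interval_sub_left ((hlam1 p.2).intervalIntegrable _ _)
        ((hlam1 p.2).intervalIntegrable _ _)).symm
    rw [heqfun]; exact h1.sub h2
  set g0 : ℝ → ℝ → ℝ :=
    fun r s => lam r s * Real.exp (-(∫ u in s..r, lam u s)) * A s with hg0def
  have hg0 : Continuous fun p : ℝ × ℝ => g0 p.1 p.2 :=
    (hlam.mul (Real.continuous_exp.comp hE.neg)).mul (hA.comp continuous_snd)
  -- the main claim
  have main : ∀ t ∈ Set.Icc 0 T,
      (Htilde t + ∫ s in (0:ℝ)..t, Real.exp (-(∫ r in s..t, lam r s)) * A s)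
        = Htilde 0 := by
    rintro t ⟨ht0, htT⟩
    have hsub : Icc (0:ℝ) t ⊆ Icc 0 T := Icc_subset_Icc le_rfl htT
    -- Step A : pointwise FTC identity for the survival factor
    have stepA : ∀ s ∈ Icc (0:ℝ) t,
        Real.exp (-(∫ r in s..t, lam r s))
          = 1 - ∫ r in s..t, lam r s * Real.exp (-(∫ u in s..r, lam u s)) := by
      rintro s ⟨hs0, hst⟩
      have hprim : ∀ r : ℝ, HasDerivAt (fun x => ∫ u in s..x, lam u s) (lam r s) r :=
        fun r => integral_hasDerivAt_right ((hlam1 s).intervalIntegrable _ _)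
          ((hlam1 s).stronglyMeasurableAtFilter _ _) (hlam1 s).continuousAt
      have hphi : ∀ r : ℝ, HasDerivAt (fun x => Real.exp (-(∫ u in s..x, lam u s)))
          (Real.exp (-(∫ u in s..r, lam u s)) * (-(lam r s))) r :=
        fun r => ((hprim r).neg).exp
      have hc : Continuous fun r => Real.exp (-(∫ u in s..r, lam u s)) * (-(lam r s)) := by
        exact (Real.continuous_exp.comp
          ((hE.comp (continuous_id.prodMk continuous_const)).neg)).mul (hlam1 s).neg
      have hFTC := integral_eq_sub_of_hasDerivAt (fun r _ => hphi r)
        (hc.intervalIntegrable s t)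
      have hzero : Real.exp (-(∫ u in s..s, lam u s)) = 1 := by
        rw [integral_same, neg_zero, Real.exp_zero]
      rw [hzero] at hFTC
      have hneg : (∫ r in s..t, Real.exp (-(∫ u in s..r, lam u s)) * (-(lam r s)))
          = -∫ r in s..t, lam r s * Real.exp (-(∫ u in s..r, lam u s)) := by
        rw [← intervalIntegral.integral_neg]
        apply integral_congr
        intro r _
        ring
      rw [hneg] at hFTC
      linarith [hFTC]
    -- Step B : rewrite the mass integral
    have hIs_cont : Continuous fun s =>
        ∫ r in s..t, lam r s * Real.exp (-(∫ u in s..r, lam u s)) := by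
      have hg2u : Continuous (Function.uncurry fun (s r : ℝ) =>
          lam r s * Real.exp (-(∫ u in s..r, lam u s))) := by
        have : Continuous fun q : ℝ × ℝ =>
            lam q.2 q.1 * Real.exp (-(∫ u in q.1..q.2, lam u q.1)) :=
          (hlam.comp (continuous_snd.prodMk continuous_fst)).mul
            (Real.continuous_exp.comp
              ((hE.comp (continuous_snd.prodMk continuous_fst)).neg))
        exact this
      have h1 : Continuous fun s : ℝ =>
          ∫ r in (0:ℝ)..t, lam r s * Real.exp (-(∫ u in s..r, lam u s)) :=
        continuous_parametric_intervalIntegral_of_continuous' hg2u 0 t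
      have h2 : Continuous fun s : ℝ =>
          ∫ r in (0:ℝ)..s, lam r s * Real.exp (-(∫ u in s..r, lam u s)) :=
        continuous_parametric_intervalIntegral_of_continuous hg2u continuous_id
      have heqfun : (fun s : ℝ =>
          ∫ r in s..t, lam r s * Real.exp (-(∫ u in s..r, lam u s)))
          = fun s : ℝ => (∫ r in (0:ℝ)..t, lam r s * Real.exp (-(∫ u in s..r, lam u s)))
            - ∫ r in (0:ℝ)..s, lam r s * Real.exp (-(∫ u in s..r, lam u s)) := by
        funext s
        have hcρ : Continuous fun r => lam r s * Real.exp (-(∫ u in s..r, lam u s)) :=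
          (hlam1 s).mul (Real.continuous_exp.comp
            ((hE.comp (continuous_id.prodMk continuous_const)).neg))
        exact (integral_interval_sub_left (hcρ.intervalIntegrable _ _)
          (hcρ.intervalIntegrable _ _)).symm
      rw [heqfun]; exact h1.sub h2
    have hBnd : (∫ s in (0:ℝ)..t, Real.exp (-(∫ r in s..t, lam r s)) * A s)
        = (∫ s in (0:ℝ)..t, A s)
          - ∫ s in (0:ℝ)..t, (∫ r in s..t, lam r s * Real.exp (-(∫ u in s..r, lam u s))) * A s := by
      rw [← integral_sub (g := fun s => (∫ r in s..t, lam r s * Real.exp (-(∫ u in s..r, lam u s))) * A s) (hA.intervalIntegrable _ _) ((hIs_cont.mul hA).intervalIntegrable _ _)]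
      apply integral_congr
      intro s hs
      rw [uIcc_of_le ht0] at hs
      beta_reduce
      rw [stepA s hs]
      ring
    -- Step C+D : swap the triangle integral
    have hCD : (∫ s in (0:ℝ)..t,
          (∫ r in s..t, lam r s * Real.exp (-(∫ u in s..r, lam u s))) * A s)
        = ∫ r in (0:ℝ)..t, ∫ s in (0:ℝ)..r, g0 r s := by
      rw [← triangle_swap g0 hg0 t ht0]
      apply integral_congr
      intro s _
      exact (intervalIntegral.integral_mul_const (A s)
        fun r => lam r s * Real.exp (-(∫ u in s..r, lam u s))).symm
    -- Step E : use the integral equation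
    have hE2 : (∫ r in (0:ℝ)..t, ∫ s in (0:ℝ)..r, g0 r s)
        = (∫ r in (0:ℝ)..t, A r) - ∫ r in (0:ℝ)..t, H r := by
      rw [← integral_sub (hA.intervalIntegrable _ _) (hH.intervalIntegrable _ _)]
      apply integral_congr
      intro r hr
      rw [uIcc_of_le ht0] at hr
      have := heq r (hsub hr)
      simp only [hg0def]
      linarith [this]
    -- Step F : FTC for Htilde
    have hF : Htilde t - Htilde 0 = -∫ r in (0:ℝ)..t, H r := by
      have := integral_eq_sub_of_hasDerivAt
        (f := Htilde) (f' := fun r => -H r)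
        (fun r hr => hderiv r (hsub (by rwa [uIcc_of_le ht0] at hr)))
        ((hH.neg).intervalIntegrable 0 t)
      rw [intervalIntegral.integral_neg] at this
      linarith [this]
    rw [hBnd, hCD, hE2]
    linarith [hF]
  exact ⟨main, fun h1 t ht => by rw [main t ht, h1]⟩
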